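/- For every N ∈ ℕ with N ≥ 1, every p > 0 and every μ ∈ ℝ, the function y ↦ exp(N·E(y,p,μ)) is integrable on ℝ (its Lebesgue integral over ℝ is finite); here the assumption a > 1 is essential. -/

import Mathlib

/-- The single-cell partition function `K(y,p,μ)` with cell volume `υ` and ratio `a`. -/
noncomputable def K (υ a y p μ : ℝ) : ℝ :=
  ∑' n : ℕ, (υ ^ n / (Nat.factorial n : ℝ)) *
    Real.exp ((y + μ) * n - (a * p / 2) * (n : ℝ) ^ 2)

/-- The function `E(y,p,μ) = -y²/(2p) + ln K(y,p,μ)`. -/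
noncomputable def E (υ a y p μ : ℝ) : ℝ :=
  -(y ^ 2) / (2 * p) + Real.log (K υ a y p μ)

lemma summable_K (υ a y p μ : ℝ) (hυ : 0 ≤ υ) (hap : 0 ≤ a * p) :
    Summable (fun n : ℕ => (υ ^ n / (Nat.factorial n : ℝ)) *
      Real.exp ((y + μ) * n - (a * p / 2) * (n : ℝ) ^ 2)) := by
  refine Summable.of_nonneg_of_le (fun n => by positivity) (fun n => ?_)
    (Real.summable_pow_div_factorial (υ * Real.exp (y + μ)))
  have h1 : Real.exp ((y + μ) * n - (a * p / 2) * (n : ℝ) ^ 2) ≤ Real.exp ((y + μ) * n) := by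
    apply Real.exp_le_exp.mpr
    nlinarith [sq_nonneg (n : ℝ), mul_nonneg hap (sq_nonneg (n : ℝ))]
  calc (υ ^ n / (Nat.factorial n : ℝ)) * Real.exp ((y + μ) * n - (a * p / 2) * (n : ℝ) ^ 2)
      ≤ (υ ^ n / (Nat.factorial n : ℝ)) * Real.exp ((y + μ) * n) := by
        apply mul_le_mul_of_nonneg_left h1 (by positivity)
    _ = (υ * Real.exp (y + μ)) ^ n / (Nat.factorial n : ℝ) := by
        rw [mul_pow, mul_comm ((y : ℝ) + μ) (n : ℝ), Real.exp_nat_mul]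
        ring

lemma one_le_K (υ a y p μ : ℝ) (hυ : 0 ≤ υ) (hap : 0 ≤ a * p) : 1 ≤ K υ a y p μ := by
  have hs := summable_K υ a y p μ hυ hap
  have h0 := hs.le_tsum 0 (fun i _ => by positivity)
  simpa [K] using h0

lemma K_le (υ a y p μ : ℝ) (hυ : 0 ≤ υ) (hap : 0 < a * p) :
    K υ a y p μ ≤ Real.exp (υ + (y + μ) ^ 2 / (2 * (a * p))) := by
  have hs := summable_K υ a y p μ hυ hap.le
  have hbound : ∀ n : ℕ, (υ ^ n / (Nat.factorial n : ℝ)) *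
      Real.exp ((y + μ) * n - (a * p / 2) * (n : ℝ) ^ 2)
      ≤ (υ ^ n / (Nat.factorial n : ℝ)) * Real.exp ((y + μ) ^ 2 / (2 * (a * p))) := by
    intro n
    apply mul_le_mul_of_nonneg_left _ (by positivity)
    apply Real.exp_le_exp.mpr
    rw [le_div_iff₀ (by positivity : (0:ℝ) < 2 * (a * p))]
    nlinarith [sq_nonneg (a * p * (n : ℝ) - (y + μ))]
  have hs2 : Summable (fun n : ℕ => (υ ^ n / (Nat.factorial n : ℝ)) *
      Real.exp ((y + μ) ^ 2 / (2 * (a * p)))) :=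
    (Real.summable_pow_div_factorial υ).mul_right _
  have h := hs.tsum_le_tsum hbound hs2
  have hexp : (∑' n : ℕ, (υ ^ n / (Nat.factorial n : ℝ)) *
      Real.exp ((y + μ) ^ 2 / (2 * (a * p))))
      = Real.exp υ * Real.exp ((y + μ) ^ 2 / (2 * (a * p))) := by
    rw [tsum_mul_right]
    congr 1
    rw [Real.exp_eq_exp_ℝ, NormedSpace.exp_eq_tsum_div]
  rw [K, Real.exp_add]
  calc K υ a y p μ ≤ _ := h
    _ = _ := hexp

lemma integrable_exp_real_quadratic {b : ℝ} (hb : 0 < b) (c d : ℝ) :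
    MeasureTheory.Integrable (fun y : ℝ => Real.exp (-b * y ^ 2 + c * y + d)) := by
  have h := (integrable_cexp_quadratic (b := (b : ℂ)) (by simpa using hb) c d).norm
  refine h.congr (Filter.Eventually.of_forall fun x => ?_)
  have : -(b : ℂ) * (x : ℂ) ^ 2 + (c : ℂ) * (x : ℂ) + (d : ℂ)
      = ((-b * x ^ 2 + c * x + d : ℝ) : ℂ) := by push_cast; ring
  simp only [this, Complex.norm_exp, Complex.ofReal_re]

lemma measurable_K (υ a p μ : ℝ) (hυ : 0 ≤ υ) (hap : 0 ≤ a * p) :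
    Measurable (fun y : ℝ => K υ a y p μ) := by
  apply measurable_of_tendsto_metrizable
    (f := fun n (y : ℝ) => ∑ i ∈ Finset.range n, (υ ^ i / (Nat.factorial i : ℝ)) *
      Real.exp ((y + μ) * i - (a * p / 2) * (i : ℝ) ^ 2))
  · intro n
    apply Finset.measurable_sum
    intro i _
    apply Measurable.const_mul
    exact (((measurable_id.add_const μ).mul_const _).sub_const _).exp
  · rw [tendsto_pi_nhds]
    intro y
    exact (summable_K υ a y p μ hυ hap).hasSum.tendsto_sum_nat

theorem stmt_6 (υ a : ℝ) (hυ : 0 < υ) (ha : 1 < a) (N : ℕ) (hN : 1 ≤ N)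
    (p μ : ℝ) (hp : 0 < p) :
    MeasureTheory.Integrable (fun y : ℝ => Real.exp (N * E υ a y p μ)) := by
  have hap : 0 < a * p := by positivity
  set b : ℝ := (N : ℝ) * (a - 1) / (2 * a * p) with hb_def
  have hb : 0 < b := by
    have : (1 : ℝ) ≤ (N : ℝ) := by exact_mod_cast hN
    apply div_pos (by nlinarith) (by positivity)
  set c : ℝ := (N : ℝ) * μ / (a * p) with hc_def
  set d : ℝ := (N : ℝ) * υ + (N : ℝ) * μ ^ 2 / (2 * (a * p)) with hd_def
  have hg : MeasureTheory.Integrable (fun y : ℝ => Real.exp (-b * y ^ 2 + c * y + d)) :=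
    integrable_exp_real_quadratic hb c d
  refine MeasureTheory.Integrable.mono' hg ?_ ?_
  · apply Measurable.aestronglyMeasurable
    apply Measurable.exp
    apply Measurable.const_mul
    unfold E
    exact ((measurable_id.pow_const 2).neg.div_const _).add
      (Real.measurable_log.comp (measurable_K υ a p μ hυ.le hap.le))
  · refine Filter.Eventually.of_forall fun y => ?_
    rw [Real.norm_eq_abs, Real.abs_exp, Real.exp_le_exp]
    have hK1 : 1 ≤ K υ a y p μ := one_le_K υ a y p μ hυ.le hap.le
    have hlog : Real.log (K υ a y p μ) ≤ υ + (y + μ) ^ 2 / (2 * (a * p)) := by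
      calc Real.log (K υ a y p μ) ≤ Real.log (Real.exp (υ + (y + μ) ^ 2 / (2 * (a * p)))) :=
            Real.log_le_log (by linarith) (K_le υ a y p μ hυ.le hap)
        _ = _ := Real.log_exp _
    have hE : E υ a y p μ ≤ -(y ^ 2) / (2 * p) + (υ + (y + μ) ^ 2 / (2 * (a * p))) := by
      unfold E; linarith
    have hNE : (N : ℝ) * E υ a y p μ
        ≤ (N : ℝ) * (-(y ^ 2) / (2 * p) + (υ + (y + μ) ^ 2 / (2 * (a * p)))) :=
      mul_le_mul_of_nonneg_left hE (by positivity)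
    refine hNE.trans (le_of_eq ?_)
    rw [hb_def, hc_def, hd_def]
    field_simp
    ring
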